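/- Let F be a left-continuous Wardowski function and a > 0, and let φ(t) = sup { s ≥ 0 : a + F(s) ≤ F(t) }. Then φ is increasing, regressive (φ(0) = 0 and φ(t) < t for t > 0), and Matkowski admissible: φⁿ(t) → 0 as n → ∞ for each t ≥ 0. -/

import Mathlib

open Filter

/-- For a left-continuous Wardowski function `F` and `a > 0`, the
function `φ t = sup {s ≥ 0 : a + F s ≤ F t}` is increasing on `[0,∞)`, regressive
(`φ 0 = 0` and `φ t < t` for `t > 0`), and Matkowski admissible:
`φⁿ t → 0` as `n → ∞` for each `t ≥ 0`. -/
theorem wardowski_leftCont_phi_matkowski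
    (F : ℝ → EReal)
    (hfin : ∀ t, 0 ≤ t → F t < ⊤)
    (hbot : ∀ t, 0 ≤ t → (F t = ⊥ ↔ t = 0))
    (hmono : ∀ s t, 0 ≤ s → s < t → F s < F t)
    (hlim : Tendsto F (nhdsWithin 0 (Set.Ioi 0)) (nhds ⊥))
    (hlc : ∀ t : ℝ, 0 < t → Tendsto F (nhdsWithin t (Set.Iio t)) (nhds (F t)))
    (a : ℝ) (ha : 0 < a)
    (φ : ℝ → ℝ) (hφ : ∀ t, φ t = sSup {s : ℝ | 0 ≤ s ∧ (a : EReal) + F s ≤ F t}) :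
    (∀ t₁ t₂, 0 ≤ t₁ → t₁ ≤ t₂ → φ t₁ ≤ φ t₂) ∧
    φ 0 = 0 ∧ (∀ t, 0 < t → φ t < t) ∧
    (∀ t, 0 ≤ t → Tendsto (fun n => φ^[n] t) atTop (nhds 0)) := by
  set S : ℝ → Set ℝ := fun t => {s : ℝ | 0 ≤ s ∧ (a : EReal) + F s ≤ F t} with hS
  have hF0 : F 0 = ⊥ := (hbot 0 le_rfl).mpr rfl
  have hzero : ∀ t, (0:ℝ) ∈ S t := by
    intro t
    refine ⟨le_rfl, ?_⟩
    rw [hF0, EReal.add_bot]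
    exact bot_le
  have hmono' : ∀ s t, 0 ≤ s → s ≤ t → F s ≤ F t := by
    intro s t hs hst
    rcases hst.lt_or_eq with h | h
    · exact (hmono s t hs h).le
    · rw [h]
  have hFreal : ∀ t, 0 < t → ∃ x : ℝ, F t = (x : EReal) := by
    intro t ht
    have hb : F t ≠ ⊥ := fun h => absurd ((hbot t ht.le).mp h) ht.ne'
    have htop : F t ≠ ⊤ := (hfin t ht.le).ne
    exact ⟨(F t).toReal, (EReal.coe_toReal htop hb).symm⟩
  have hbdd : ∀ t, 0 ≤ t → ∀ s ∈ S t, s ≤ t := by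
    intro t ht s hsS
    by_contra h
    push_neg at h
    have hs0 : 0 < s := lt_of_le_of_lt ht h
    obtain ⟨x, hx⟩ := hFreal s hs0
    have h1 : F t < F s := hmono t s ht h
    have h2 : (a : EReal) + F s ≤ F t := hsS.2
    have h3 : (a : EReal) + (x : EReal) < (x : EReal) := by
      rw [← hx]; exact lt_of_le_of_lt h2 h1
    rw [← EReal.coe_add] at h3
    have := EReal.coe_lt_coe_iff.mp h3
    linarith
  have hbddAbove : ∀ t, 0 ≤ t → BddAbove (S t) := fun t ht => ⟨t, fun s hs => hbdd t ht s hs⟩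
  have hne : ∀ t, (S t).Nonempty := fun t => ⟨0, hzero t⟩
  have hφnonneg : ∀ t, 0 ≤ t → 0 ≤ φ t := by
    intro t ht
    rw [hφ t]
    exact le_csSup (hbddAbove t ht) (hzero t)
  have hφle : ∀ t, 0 ≤ t → φ t ≤ t := by
    intro t ht
    rw [hφ t]
    exact csSup_le (hne t) (fun s hs => hbdd t ht s hs)
  have hφ0 : φ 0 = 0 := le_antisymm (hφle 0 le_rfl) (hφnonneg 0 le_rfl)
  -- monotonicity
  have hmonoφ : ∀ t₁ t₂, 0 ≤ t₁ → t₁ ≤ t₂ → φ t₁ ≤ φ t₂ := by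
    intro t₁ t₂ h1 h12
    rw [hφ t₁, hφ t₂]
    refine csSup_le_csSup (hbddAbove t₂ (h1.trans h12)) (hne t₁) ?_
    intro s hs
    exact ⟨hs.1, hs.2.trans (hmono' t₁ t₂ h1 h12)⟩
  -- key inequality
  have hkey : ∀ t, 0 ≤ t → (a : EReal) + F (φ t) ≤ F t := by
    intro t ht
    rcases (hφnonneg t ht).eq_or_lt with h | h
    · rw [← h, (hbot 0 le_rfl).mpr rfl, EReal.add_bot]
      exact bot_le
    · -- φ t > 0
      have hclaim : ∀ u, 0 ≤ u → u < φ t → (a : EReal) + F u ≤ F t := by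
        intro u hu hult
        rw [hφ t] at hult
        obtain ⟨s, hsS, hus⟩ := exists_lt_of_lt_csSup (hne t) hult
        have : F u ≤ F s := (hmono u s hu hus).le
        calc (a : EReal) + F u ≤ (a : EReal) + F s := by
              exact add_le_add_right this _
          _ ≤ F t := hsS.2
      have hten : Tendsto (fun u => (a : EReal) + F u) (nhdsWithin (φ t) (Set.Iio (φ t)))
          (nhds ((a : EReal) + F (φ t))) := by
        have hc : ContinuousAt (fun p : EReal × EReal => p.1 + p.2) ((a : EReal), F (φ t)) := by
          apply EReal.continuousAt_add
          · left; exact EReal.coe_ne_top a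
          · left; exact EReal.coe_ne_bot a
        exact hc.tendsto.comp ((tendsto_const_nhds).prodMk_nhds (hlc (φ t) h))
      refine le_of_tendsto hten ?_
      filter_upwards [Ioo_mem_nhdsLT_of_mem (Set.mem_Ioc.mpr ⟨h, le_rfl⟩)] with u hu
      exact hclaim u hu.1.le hu.2
  -- regressive
  have hφlt : ∀ t, 0 < t → φ t < t := by
    intro t ht
    refine lt_of_le_of_ne (hφle t ht.le) ?_
    intro heq
    have h1 := hkey t ht.le
    rw [heq] at h1
    obtain ⟨x, hx⟩ := hFreal t ht
    rw [hx, ← EReal.coe_add] at h1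
    have := EReal.coe_le_coe_iff.mp h1
    linarith
  refine ⟨hmonoφ, hφ0, hφlt, ?_⟩
  intro t ht
  set u : ℕ → ℝ := fun n => φ^[n] t with hu
  have husucc : ∀ n, u (n + 1) = φ (u n) := by
    intro n; simp [hu, Function.iterate_succ_apply']
  have hpos : ∀ n, 0 ≤ u n := by
    intro n
    induction n with
    | zero => simpa [hu] using ht
    | succ k ih => rw [husucc k]; exact hφnonneg _ ih
  have hdec : Antitone u := by
    refine antitone_nat_of_succ_le ?_
    intro n
    rw [husucc n]
    exact hφle _ (hpos n)
  have hbb : BddBelow (Set.range u) := ⟨0, fun x ⟨n, hn⟩ => hn ▸ hpos n⟩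
  have htend : Tendsto u atTop (nhds (⨅ n, u n)) := tendsto_atTop_ciInf hdec hbb
  have hL0 : 0 ≤ ⨅ n, u n := le_ciInf hpos
  have hLle : ∀ n, (⨅ n, u n) ≤ u n := fun n => ciInf_le hbb n
  have hL : (⨅ n, u n) = 0 := by
    by_contra hne0
    have hL : 0 < ⨅ n, u n := lt_of_le_of_ne hL0 (Ne.symm hne0)
    set L := ⨅ n, u n
    have hupos : ∀ n, 0 < u n := fun n => lt_of_lt_of_le hL (hLle n)
    have hstep : ∀ n, (a : EReal) + F (u (n + 1)) ≤ F (u n) := by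
      intro n
      rw [husucc n]
      exact hkey (u n) (hpos n)
    have hiter : ∀ n : ℕ, (((n : ℝ) * a : ℝ) : EReal) + F (u n) ≤ F (u 0) := by
      intro n
      induction n with
      | zero => simp
      | succ k ih =>
        have h1 : (((k+1 : ℕ) : ℝ) * a : ℝ) = ((k:ℝ) * a) + a := by push_cast; ring
        rw [h1, EReal.coe_add, add_assoc]
        calc ((k * a : ℝ) : EReal) + ((a : EReal) + F (u (k+1)))
            ≤ ((k * a : ℝ) : EReal) + F (u k) := add_le_add_right (hstep k) _
          _ ≤ F (u 0) := ih
    obtain ⟨x, hx⟩ := hFreal L hL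
    obtain ⟨y, hy⟩ := hFreal (u 0) (hupos 0)
    have hfinal : ∀ n : ℕ, (n : ℝ) * a + x ≤ y := by
      intro n
      have h1 : F L ≤ F (u n) := hmono' L (u n) hL.le (hLle n)
      have h2 : ((n * a : ℝ) : EReal) + F L ≤ F (u 0) :=
        le_trans (add_le_add_right h1 _) (hiter n)
      rw [hx, hy, ← EReal.coe_add] at h2
      exact EReal.coe_le_coe_iff.mp h2
    obtain ⟨n, hn⟩ := exists_nat_gt ((y - x) / a)
    have := hfinal n
    have : (y - x) / a < (y - x) / a := by
      calc (y - x) / a < n := hn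
        _ ≤ (y - x) / a := by
          rw [le_div_iff₀ ha]
          linarith [hfinal n]
    linarith
  rw [hL] at htend
  exact htend
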